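/- arXiv:math/0212307 — 2 statements merged into one kernel-verified Lean document; each statement's English description precedes it below -/
import Mathlib

section
/- Let D ⊂ ℝⁿ be nonempty compact, φ : D → (0,∞) continuous and strictly positive, and f : [0,∞) → [0,∞) continuous, strictly increasing and unbounded. Then every global minimum point of H₁(q) = sup_{x ∈ D} φ(x) f(|x − q|) belongs to co(D). -/
open Set

open scoped RealInnerProductSpace

/-- Padding sums: summing a `Fin k`-indexed family extended by zero over `Fin m`. -/
lemma pad_sum_aux {M : Type*} [AddCommMonoid M] {k m : ℕ} (hkm : k ≤ m) (F : Fin k → M) :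
    ∑ j : Fin m, (if h : (j : ℕ) < k then F ⟨j, h⟩ else 0) = ∑ i, F i := by
  rw [Fin.sum_univ_eq_sum_range (fun j => if h : j < k then F ⟨j, h⟩ else 0) m,
    ← Finset.sum_subset (Finset.range_subset_range.mpr hkm)
      (by intro x hx hnx; simp only [Finset.mem_range] at hnx; simp [hnx]),
    ← Fin.sum_univ_eq_sum_range (fun j => if h : j < k then F ⟨j, h⟩ else 0) k]
  refine Finset.sum_congr rfl fun j _ => ?_
  simp [j.isLt]

/-- Convex hull of a compact set in a Euclidean space is compact (via Carathéodory). -/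
lemma isCompact_convexHull_aux {n : ℕ} {D : Set (EuclideanSpace ℝ (Fin n))}
    (hD : IsCompact D) (hDne : D.Nonempty) : IsCompact (convexHull ℝ D) := by
  classical
  obtain ⟨d, hd⟩ := hDne
  set m := n + 2 with hm
  set g : (Fin m → ℝ) × (Fin m → EuclideanSpace ℝ (Fin n)) → EuclideanSpace ℝ (Fin n) :=
    fun p => ∑ i, p.1 i • p.2 i with hg
  have hgc : Continuous g := by
    apply continuous_finset_sum
    intro i _
    exact ((continuous_apply i).comp continuous_fst).smul
      ((continuous_apply i).comp continuous_snd)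
  have hK : IsCompact ((stdSimplex ℝ (Fin m)) ×ˢ (Set.pi Set.univ fun _ : Fin m => D)) :=
    (isCompact_stdSimplex (𝕜 := ℝ) (ι := Fin m)).prod (isCompact_univ_pi fun _ => hD)
  have him : convexHull ℝ D
      = g '' ((stdSimplex ℝ (Fin m)) ×ˢ (Set.pi Set.univ fun _ : Fin m => D)) := by
    apply Subset.antisymm
    · intro x hx
      obtain ⟨ι, hι, z, w, hzD, hai, hwpos, hw1, hwz⟩ :=
        eq_pos_convex_span_of_mem_convexHull hx
      have hcard : Fintype.card ι ≤ m := by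
        have h1 := hai.card_le_finrank_succ
        have h2 : Module.finrank ℝ (vectorSpan ℝ (Set.range z)) ≤
            Module.finrank ℝ (EuclideanSpace ℝ (Fin n)) := Submodule.finrank_le _
        have h3 : Module.finrank ℝ (EuclideanSpace ℝ (Fin n)) = n := finrank_euclideanSpace_fin
        omega
      set k := Fintype.card ι with hk
      let e : ι ≃ Fin k := Fintype.equivFin ι
      set W : Fin m → ℝ := fun j => if h : (j : ℕ) < k then w (e.symm ⟨j, h⟩) else 0 with hW
      set Z : Fin m → EuclideanSpace ℝ (Fin n) :=
        fun j => if h : (j : ℕ) < k then z (e.symm ⟨j, h⟩) else d with hZ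
      have hWsum : ∑ j, W j = 1 := by
        rw [hW, pad_sum_aux hcard (fun i => w (e.symm i)), Equiv.sum_comp e.symm w, hw1]
      refine ⟨(W, Z), ⟨⟨fun j => ?_, hWsum⟩, fun j _ => ?_⟩, ?_⟩
      · by_cases h : (j : ℕ) < k
        · simp only [hW, dif_pos h]; exact (hwpos _).le
        · simp [hW, h]
      · by_cases h : (j : ℕ) < k
        · simp only [hZ, dif_pos h]; exact hzD (Set.mem_range_self _)
        · simpa [hZ, h] using hd
      · have hterm : ∀ j : Fin m, W j • Z j =
            (if h : (j : ℕ) < k then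
              (fun i : Fin k => w (e.symm i) • z (e.symm i)) ⟨j, h⟩ else 0) := by
          intro j
          by_cases h : (j : ℕ) < k <;> simp [hW, hZ, h]
        calc g (W, Z) = ∑ j, W j • Z j := rfl
          _ = ∑ j : Fin m, (if h : (j : ℕ) < k then
                (fun i : Fin k => w (e.symm i) • z (e.symm i)) ⟨j, h⟩ else 0) :=
              Finset.sum_congr rfl fun j _ => hterm j
          _ = ∑ i : Fin k, w (e.symm i) • z (e.symm i) :=
              pad_sum_aux hcard (fun i : Fin k => w (e.symm i) • z (e.symm i))
          _ = ∑ i, w i • z i := Equiv.sum_comp e.symm (fun i => w i • z i)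
          _ = x := hwz
    · rintro _ ⟨⟨W, Z⟩, ⟨⟨hW0, hW1⟩, hZ⟩, rfl⟩
      have : g (W, Z) = Finset.univ.centerMass W Z :=
        (Finset.univ.centerMass_eq_of_sum_1 Z hW1).symm
      rw [this]
      exact Finset.univ.centerMass_mem_convexHull (fun i _ => hW0 i)
        (by rw [hW1]; norm_num) (fun i _ => hZ i (Set.mem_univ i))
  rw [him]
  exact hK.image hgc

/-- for strictly positive `φ` and strictly increasing `f`, every global
minimum point of `H₁` belongs to the convex hull of `D`. -/
theorem stmt_6 {n : ℕ} (D : Set (EuclideanSpace ℝ (Fin n)))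
    (hD : IsCompact D) (hDne : D.Nonempty)
    (φ : EuclideanSpace ℝ (Fin n) → ℝ) (f : ℝ → ℝ)
    (hφc : ContinuousOn φ D) (hφpos : ∀ x ∈ D, 0 < φ x)
    (hfc : ContinuousOn f (Ici 0)) (hfm : StrictMonoOn f (Ici 0))
    (hf0 : ∀ s : ℝ, 0 ≤ s → 0 ≤ f s)
    (hfu : ∀ M : ℝ, ∃ s : ℝ, 0 ≤ s ∧ M ≤ f s) :
    ∀ q : EuclideanSpace ℝ (Fin n),
      (∀ p : EuclideanSpace ℝ (Fin n),
        sSup ((fun x => φ x * f ‖x - q‖) '' D) ≤ sSup ((fun x => φ x * f ‖x - p‖) '' D)) →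
      q ∈ convexHull ℝ D := by
  intro q hmin
  by_contra hq
  set C := convexHull ℝ D with hC
  have hCcomp : IsCompact C := isCompact_convexHull_aux hD hDne
  have hCconv : Convex ℝ C := convex_convexHull ℝ D
  have hCne : C.Nonempty := hDne.convexHull
  -- projection of q onto C
  obtain ⟨p, hpC, hp⟩ := exists_norm_eq_iInf_of_complete_convex hCne
    (hCcomp.isClosed.isComplete) hCconv q
  have hinner : ∀ w ∈ C, ⟪q - p, w - p⟫ ≤ 0 :=
    (norm_eq_iInf_iff_real_inner_le_zero hCconv hpC).mp hp
  have hqp : q ≠ p := fun h => hq (h ▸ hpC)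
  -- strict inequality for all x ∈ D
  have hstrict : ∀ x ∈ D, ‖x - p‖ < ‖x - q‖ := by
    intro x hx
    have hxC : x ∈ C := subset_convexHull ℝ D hx
    have h1 : ⟪q - p, x - p⟫ ≤ 0 := hinner x hxC
    have key : ‖x - p‖ ^ 2 < ‖x - q‖ ^ 2 := by
      have hid : x - q = (x - p) - (q - p) := by abel
      have hexp : ‖(x - p) - (q - p)‖ ^ 2
          = ‖x - p‖ ^ 2 - 2 * ⟪x - p, q - p⟫ + ‖q - p‖ ^ 2 := norm_sub_sq_real _ _
      have hqp' : q - p ≠ 0 := sub_ne_zero.mpr hqp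
      have hpos : 0 < ‖q - p‖ := norm_pos_iff.mpr hqp'
      rw [hid]
      nlinarith [real_inner_comm (q - p) (x - p)]
    nlinarith [norm_nonneg (x - p), norm_nonneg (x - q)]
  -- continuity of the objective on D
  have hcont : ∀ r : EuclideanSpace ℝ (Fin n),
      ContinuousOn (fun x => φ x * f ‖x - r‖) D := by
    intro r
    apply hφc.mul
    exact hfc.comp ((continuous_id.sub continuous_const).norm.continuousOn)
      (fun x _ => norm_nonneg _)
  obtain ⟨x₀, hx₀D, hx₀max⟩ := hD.exists_isMaxOn hDne (hcont p)
  have hbddq : BddAbove ((fun x => φ x * f ‖x - q‖) '' D) :=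
    (hD.image_of_continuousOn (hcont q)).bddAbove
  have hSp : sSup ((fun x => φ x * f ‖x - p‖) '' D) ≤ φ x₀ * f ‖x₀ - p‖ :=
    csSup_le (hDne.image _) (by rintro _ ⟨x, hx, rfl⟩; exact hx₀max hx)
  have hlt : φ x₀ * f ‖x₀ - p‖ < φ x₀ * f ‖x₀ - q‖ := by
    have h2 := hfm (mem_Ici.mpr (norm_nonneg (x₀ - p))) (mem_Ici.mpr (norm_nonneg (x₀ - q)))
      (hstrict x₀ hx₀D)
    exact mul_lt_mul_of_pos_left h2 (hφpos x₀ hx₀D)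
  have hle : φ x₀ * f ‖x₀ - q‖ ≤ sSup ((fun x => φ x * f ‖x - q‖) '' D) :=
    le_csSup hbddq ⟨x₀, hx₀D, rfl⟩
  have := hmin p
  linarith
end

section
/- Let V ⊂ ℝⁿ be a nonempty compact set with 0 ∉ co(V). Suppose the pair (c*, r*), with c* ≠ 0, minimizes r/|c| over all pairs (c, r) with c ∈ ℝⁿ, r ≥ 0 such that the closed ball B(c, r) contains V. Set γ* := r*/|c*| and q* := (1 − (γ*)²)c*. Then q* is a global minimizer of q ↦ sup_{x ∈ V} |q − x|/|x| and the minimal value equals γ*. -/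
open Set


lemma apol_fwd {E : Type*} [NormedAddCommGroup E] [InnerProductSpace ℝ E]
    (c x : E) (γ : ℝ) (hγ0 : 0 ≤ γ) (hγ1 : γ ≤ 1) (h : ‖c - x‖ ≤ γ * ‖c‖) :
    ‖(1 - γ ^ 2) • c - x‖ ≤ γ * ‖x‖ := by
  have h2 : ‖c - x‖ ^ 2 ≤ (γ * ‖c‖) ^ 2 := pow_le_pow_left₀ (norm_nonneg _) h 2
  rw [norm_sub_sq_real] at h2
  have key : ‖(1 - γ ^ 2) • c - x‖ ^ 2 ≤ (γ * ‖x‖) ^ 2 := by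
    rw [norm_sub_sq_real, norm_smul, real_inner_smul_left]
    have hh : ‖(1 - γ ^ 2 : ℝ)‖ = 1 - γ ^ 2 := by
      rw [Real.norm_eq_abs, abs_of_nonneg]; nlinarith
    rw [hh]
    nlinarith [mul_nonneg (by nlinarith : (0:ℝ) ≤ 1 - γ ^ 2)
      (by nlinarith : (0:ℝ) ≤ (γ * ‖c‖) ^ 2 - (‖c‖ ^ 2 - 2 * inner ℝ c x + ‖x‖ ^ 2))]
  have := Real.sqrt_le_sqrt key
  rwa [Real.sqrt_sq (norm_nonneg _), Real.sqrt_sq (by positivity)] at this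

lemma apol_rev {E : Type*} [NormedAddCommGroup E] [InnerProductSpace ℝ E]
    (q x : E) (s : ℝ) (hs0 : 0 ≤ s) (hs1 : s < 1) (h : ‖q - x‖ ≤ s * ‖x‖) :
    ‖x - (1 - s ^ 2)⁻¹ • q‖ ≤ s * ‖q‖ / (1 - s ^ 2) := by
  have hp : (0:ℝ) < 1 - s ^ 2 := by nlinarith
  have hpne : (1 - s ^ 2 : ℝ) ≠ 0 := ne_of_gt hp
  have h2 : ‖q - x‖ ^ 2 ≤ (s * ‖x‖) ^ 2 := pow_le_pow_left₀ (norm_nonneg _) h 2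
  rw [norm_sub_sq_real] at h2
  have hqx : (inner ℝ q x : ℝ) = inner ℝ x q := (real_inner_comm x q)
  rw [hqx] at h2
  have key : ‖x - (1 - s ^ 2)⁻¹ • q‖ ^ 2 ≤ (s * ‖q‖ / (1 - s ^ 2)) ^ 2 := by
    rw [norm_sub_sq_real, norm_smul, real_inner_smul_right]
    have hn : ‖((1 - s ^ 2)⁻¹ : ℝ)‖ = (1 - s ^ 2)⁻¹ := by
      rw [Real.norm_eq_abs, abs_of_nonneg (le_of_lt (inv_pos.2 hp))]
    rw [hn]
    have goal2 : (1 - s^2)^2 * ‖x‖^2 - 2*(1-s^2) * inner ℝ x q + ‖q‖^2 ≤ s^2 * ‖q‖^2 := by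
      nlinarith [mul_nonneg hp.le
        (by nlinarith : (0:ℝ) ≤ (s * ‖x‖) ^ 2 - (‖q‖ ^ 2 - 2 * inner ℝ x q + ‖x‖ ^ 2))]
    have hmul := mul_le_mul_of_nonneg_right goal2 (sq_nonneg ((1 - s^2)⁻¹))
    have e1 : ((1 - s^2)^2 * ‖x‖^2 - 2*(1-s^2) * inner ℝ x q + ‖q‖^2) * ((1-s^2)⁻¹)^2
        = ‖x‖^2 - 2*((1-s^2)⁻¹ * inner ℝ x q) + ((1-s^2)⁻¹ * ‖q‖)^2 := by
      field_simp
    have e2 : s^2 * ‖q‖^2 * ((1-s^2)⁻¹)^2 = (s * ‖q‖ / (1-s^2))^2 := by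
      field_simp
    rw [e1, e2] at hmul
    exact hmul
  have := Real.sqrt_le_sqrt key
  rwa [Real.sqrt_sq (norm_nonneg _), Real.sqrt_sq (by positivity)] at this


lemma isCompact_hull {n : ℕ} {V : Set (EuclideanSpace ℝ (Fin n))}
    (hV : IsCompact V) (hne : V.Nonempty) : IsCompact (convexHull ℝ V) := by
  classical
  obtain ⟨x₀, hx₀⟩ := hne
  have hfc : Continuous (fun p : (Fin (n+1) → ℝ) × (Fin (n+1) → EuclideanSpace ℝ (Fin n)) =>
      ∑ i, p.1 i • p.2 i) := by
    apply continuous_finset_sum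
    intro i _
    exact ((continuous_apply i).comp continuous_fst).smul
      ((continuous_apply i).comp continuous_snd)
  have hS : IsCompact ((stdSimplex ℝ (Fin (n+1))) ×ˢ (Set.pi univ fun _ : Fin (n+1) => V)) :=
    (isCompact_stdSimplex _ _).prod (isCompact_univ_pi fun _ => hV)
  have heq : convexHull ℝ V = (fun p : (Fin (n+1) → ℝ) × (Fin (n+1) → EuclideanSpace ℝ (Fin n)) =>
      ∑ i, p.1 i • p.2 i) '' ((stdSimplex ℝ (Fin (n+1))) ×ˢ (Set.pi univ fun _ : Fin (n+1) => V)) := by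
    apply Subset.antisymm
    · intro x hx
      obtain ⟨ι, hι, z, w, hz, hai, hw, hw1, hxe⟩ := eq_pos_convex_span_of_mem_convexHull hx
      have hcard : Fintype.card ι ≤ n + 1 := by
        have h1 := hai.card_le_finrank_succ
        have h2 : Module.finrank ℝ (vectorSpan ℝ (Set.range z)) ≤ n := by
          have h3 := Submodule.finrank_le (vectorSpan ℝ (Set.range z))
          simpa [finrank_euclideanSpace_fin] using h3
        omega
      obtain ⟨e⟩ : Nonempty (ι ↪ Fin (n+1)) := by
        rw [Function.Embedding.nonempty_iff_card_le]
        simpa using hcard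
      set W : Fin (n+1) → ℝ := Function.extend e w 0 with hW
      set Z : Fin (n+1) → EuclideanSpace ℝ (Fin n) := Function.extend e z fun _ => x₀ with hZ
      have hWe : ∀ i, W (e i) = w i := fun i => e.injective.extend_apply w _ i
      have hZe : ∀ i, Z (e i) = z i := fun i => e.injective.extend_apply z _ i
      have hW0 : ∀ j, (¬∃ i, e i = j) → W j = 0 := fun j hj => Function.extend_apply' _ _ _ hj
      have hs1 : ∑ j, W j = ∑ i, w i := by
        rw [← Finset.sum_subset (Finset.subset_univ (Finset.univ.image e))
          (fun j _ hj => ?_), Finset.sum_image (fun a _ b _ h => e.injective h)]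
        · simp [hWe]
        · exact hW0 j (by simpa using hj)
      have hs2 : ∑ j, W j • Z j = ∑ i, w i • z i := by
        rw [← Finset.sum_subset (Finset.subset_univ (Finset.univ.image e))
          (fun j _ hj => ?_), Finset.sum_image (fun a _ b _ h => e.injective h)]
        · simp [hWe, hZe]
        · rw [hW0 j (by simpa using hj), zero_smul]
      refine ⟨(W, Z), ⟨⟨fun j => ?_, ?_⟩, fun j _ => ?_⟩, ?_⟩
      · show 0 ≤ W j
        rcases em (∃ i, e i = j) with ⟨i, rfl⟩ | hj
        · rw [hWe]; exact (hw i).le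
        · rw [hW0 j hj]
      · show ∑ j, W j = 1
        rw [hs1, hw1]
      · show Z j ∈ V
        rcases em (∃ i, e i = j) with ⟨i, rfl⟩ | hj
        · rw [hZe]; exact hz ⟨i, rfl⟩
        · rw [hZ, Function.extend_apply' _ _ _ hj]; exact hx₀
      · show ∑ j, W j • Z j = x
        rw [hs2, hxe]
    · rintro _ ⟨⟨w, v⟩, ⟨⟨hw0, hw1⟩, hv⟩, rfl⟩
      have h4 := Finset.centerMass_mem_convexHull (Finset.univ : Finset (Fin (n+1)))
        (fun i _ => hw0 i) (by rw [hw1]; norm_num) (fun i _ => hv i (mem_univ i))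
      rwa [Finset.centerMass_eq_of_sum_1 _ _ hw1] at h4
  rw [heq]
  exact hS.image hfc

set_option maxHeartbeats 1000000 in
/-- equivalence of the radially weighted 1-center problem with the
optimal enclosing-sphere problem: if `(c, r)` minimizes `r/|c|` among spheres
enclosing `V`, then `q* = (1 - γ*²) c` with `γ* = r/|c|` is a global minimizer of
`q ↦ sup_{x ∈ V} |q - x|/|x|`, with minimal value `γ*`. -/
theorem stmt_11 {n : ℕ} (V : Set (EuclideanSpace ℝ (Fin n)))
    (hV : IsCompact V) (hne : V.Nonempty)
    (h0 : (0 : EuclideanSpace ℝ (Fin n)) ∉ convexHull ℝ V)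
    (c : EuclideanSpace ℝ (Fin n)) (r : ℝ) (hc : c ≠ 0) (hr : 0 ≤ r)
    (hball : V ⊆ Metric.closedBall c r)
    (hopt : ∀ (c' : EuclideanSpace ℝ (Fin n)) (r' : ℝ), c' ≠ 0 → 0 ≤ r' →
      V ⊆ Metric.closedBall c' r' → r / ‖c‖ ≤ r' / ‖c'‖) :
    (⨆ x : V, ‖(1 - (r / ‖c‖) ^ 2) • c - (x : EuclideanSpace ℝ (Fin n))‖ /
        ‖(x : EuclideanSpace ℝ (Fin n))‖) = r / ‖c‖ ∧
    ∀ q : EuclideanSpace ℝ (Fin n),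
      (⨆ x : V, ‖(1 - (r / ‖c‖) ^ 2) • c - (x : EuclideanSpace ℝ (Fin n))‖ /
          ‖(x : EuclideanSpace ℝ (Fin n))‖) ≤
        ⨆ x : V, ‖q - (x : EuclideanSpace ℝ (Fin n))‖ /
          ‖(x : EuclideanSpace ℝ (Fin n))‖ := by
  classical
  haveI : Nonempty V := hne.to_subtype
  set γ : ℝ := r / ‖c‖ with hγ
  have hcn : (0:ℝ) < ‖c‖ := norm_pos_iff.2 hc
  have hγ0 : 0 ≤ γ := div_nonneg hr (norm_nonneg c)
  have hrγ : r = γ * ‖c‖ := by rw [hγ, div_mul_cancel₀ _ hcn.ne']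
  have h0V : (0 : EuclideanSpace ℝ (Fin n)) ∉ V := fun h => h0 (subset_convexHull ℝ V h)
  have hxpos : ∀ x ∈ V, (0:ℝ) < ‖x‖ := fun x hx =>
    norm_pos_iff.2 (fun h => h0V (h ▸ hx))
  -- γ < 1 via separation
  have hγ1 : γ < 1 := by
    obtain ⟨f, u, hf0, hub⟩ := geometric_hahn_banach_point_closed
      (convex_convexHull ℝ V) (isCompact_hull hV hne).isClosed h0
    have hu : (0:ℝ) < u := by simpa using hf0
    set w : EuclideanSpace ℝ (Fin n) := (InnerProductSpace.toDual ℝ _).symm f with hwdef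
    have hwx : ∀ x, (inner ℝ w x : ℝ) = f x := fun x => InnerProductSpace.toDual_symm_apply
    have hwV : ∀ x ∈ V, u < inner ℝ w x := fun x hx => by
      rw [hwx]; exact hub x (subset_convexHull ℝ V hx)
    obtain ⟨x₁, hx₁V, hx₁max⟩ := hV.exists_isMaxOn hne continuous_norm.continuousOn
    set M : ℝ := ‖x₁‖ with hM
    have hM0 : 0 ≤ M := norm_nonneg _
    have hMb : ∀ x ∈ V, ‖x‖ ≤ M := fun x hx => isMaxOn_iff.1 hx₁max x hx
    clear_value M
    have hw0 : w ≠ 0 := by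
      obtain ⟨x₀, hx₀⟩ := hne
      intro h
      have := hwV x₀ hx₀
      rw [h] at this
      simp only [inner_zero_left] at this
      linarith
    have hwn : (0:ℝ) < ‖w‖ := norm_pos_iff.2 hw0
    set t : ℝ := M^2/u + u/‖w‖^2 with ht
    clear_value t
    have ht0 : 0 < t := by rw [ht]; positivity
    have htu : M^2 ≤ t*u := by
      have e : t*u = M^2 + u^2/‖w‖^2 := by rw [ht]; field_simp
      have h5' : (0:ℝ) ≤ u^2/‖w‖^2 := by positivity
      linarith
    have htw : t*u ≤ t^2*‖w‖^2 := by
      have h5 : u ≤ t * ‖w‖^2 := by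
        have e : t*‖w‖^2 = M^2*‖w‖^2/u + u := by rw [ht]; field_simp
        have h5' : (0:ℝ) ≤ M^2*‖w‖^2/u := by positivity
        linarith
      nlinarith
    set r' : ℝ := Real.sqrt (t^2*‖w‖^2 - t*u) with hr'
    have hsub : V ⊆ Metric.closedBall (t • w) r' := by
      intro x hx
      rw [Metric.mem_closedBall, dist_eq_norm]
      have e1 : ‖x - t • w‖^2 = ‖x‖^2 - 2*t*inner ℝ w x + t^2*‖w‖^2 := by
        rw [norm_sub_sq_real, real_inner_smul_right, norm_smul, Real.norm_eq_abs,
          abs_of_pos ht0, real_inner_comm x w]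
        ring
      have e2 : ‖x - t • w‖^2 ≤ t^2*‖w‖^2 - t*u := by
        have := hwV x hx
        have := hMb x hx
        have := hxpos x hx
        nlinarith
      have := Real.sqrt_le_sqrt e2
      rwa [Real.sqrt_sq (norm_nonneg _)] at this
    have hlt : r' < ‖t • w‖ := by
      have h6 : t^2*‖w‖^2 - t*u < (t*‖w‖)^2 := by nlinarith
      have := Real.sqrt_lt_sqrt (by nlinarith) h6
      rwa [Real.sqrt_sq (by positivity), norm_smul, Real.norm_eq_abs, abs_of_pos ht0] at *
    have h7 := hopt (t • w) r' (smul_ne_zero (ne_of_gt ht0) hw0) (Real.sqrt_nonneg _) hsub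
    calc γ ≤ r' / ‖t • w‖ := h7
      _ < 1 := (div_lt_one (by rw [norm_smul, Real.norm_eq_abs, abs_of_pos ht0]; positivity)).2 hlt
  -- key step: any feasible weighted radius bounds γ from below
  have key : ∀ (q : EuclideanSpace ℝ (Fin n)) (s : ℝ), 0 ≤ s → s < 1 → q ≠ 0 →
      (∀ x ∈ V, ‖q - x‖ ≤ s * ‖x‖) → γ ≤ s := by
    intro q s hs0 hs1 hq0 hxs
    have hp : (0:ℝ) < 1 - s^2 := by nlinarith
    have hqn : (0:ℝ) < ‖q‖ := norm_pos_iff.2 hq0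
    have hsub : V ⊆ Metric.closedBall ((1-s^2)⁻¹ • q) (s * ‖q‖ / (1-s^2)) := by
      intro x hx
      rw [Metric.mem_closedBall, dist_eq_norm]
      exact apol_rev q x s hs0 hs1 (hxs x hx)
    have h8 := hopt _ _ (smul_ne_zero (inv_ne_zero hp.ne') hq0)
      (div_nonneg (mul_nonneg hs0 (norm_nonneg q)) hp.le) hsub
    rwa [norm_smul, Real.norm_eq_abs, abs_of_pos (inv_pos.2 hp),
      (show s * ‖q‖ / (1 - s^2) / ((1-s^2)⁻¹ * ‖q‖) = s by field_simp)] at h8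
  -- the candidate point
  set q : EuclideanSpace ℝ (Fin n) := (1 - γ^2) • c with hq
  have hAle : ∀ x ∈ V, ‖q - x‖ / ‖x‖ ≤ γ := by
    intro x hx
    have h9 : ‖c - x‖ ≤ γ * ‖c‖ := by
      rw [← hrγ, ← dist_eq_norm, dist_comm]
      exact hball hx
    exact (div_le_iff₀ (hxpos x hx)).2 (apol_fwd c x γ hγ0 hγ1.le h9)
  have hbdd : BddAbove (range fun x : V => ‖q - (x:EuclideanSpace ℝ (Fin n))‖ / ‖(x:EuclideanSpace ℝ (Fin n))‖) := by
    refine ⟨γ, ?_⟩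
    rintro _ ⟨x, rfl⟩
    exact hAle x x.2
  set S : ℝ := ⨆ x : V, ‖q - (x:EuclideanSpace ℝ (Fin n))‖ / ‖(x:EuclideanSpace ℝ (Fin n))‖ with hSdef
  have hSle : S ≤ γ := ciSup_le fun x => hAle x x.2
  obtain ⟨x₀, hx₀V⟩ := hne
  have hS0 : 0 ≤ S :=
    le_trans (by positivity) (le_ciSup hbdd (⟨x₀, hx₀V⟩ : V))
  have hq0 : q ≠ 0 := by
    rw [hq]
    exact smul_ne_zero (by nlinarith) hc
  have hγleS : γ ≤ S := by
    apply key q S hS0 (lt_of_le_of_lt hSle hγ1) hq0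
    intro x hx
    have := le_ciSup hbdd (⟨x, hx⟩ : V)
    exact (div_le_iff₀ (hxpos x hx)).1 this
  have part1 : S = γ := le_antisymm hSle hγleS
  refine ⟨part1, ?_⟩
  intro q'
  have hbdd' : BddAbove (range fun x : V => ‖q' - (x:EuclideanSpace ℝ (Fin n))‖ / ‖(x:EuclideanSpace ℝ (Fin n))‖) := by
    obtain ⟨z₀, hz₀V, hz₀min⟩ := hV.exists_isMinOn ⟨x₀, hx₀V⟩ continuous_norm.continuousOn
    have hδ : 0 < ‖z₀‖ := hxpos z₀ hz₀V
    refine ⟨(‖q' - c‖ + r) / ‖z₀‖, ?_⟩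
    rintro _ ⟨x, rfl⟩
    have h10 : ‖q' - (x:EuclideanSpace ℝ (Fin n))‖ ≤ ‖q' - c‖ + r := by
      have h11 : ‖q' - (x:EuclideanSpace ℝ (Fin n))‖ ≤ ‖q' - c‖ + ‖c - x‖ := by
        have := norm_add_le (q' - c) (c - x)
        simpa using this
      have h12 : ‖c - (x:EuclideanSpace ℝ (Fin n))‖ ≤ r := by
        rw [← dist_eq_norm, dist_comm]; exact hball x.2
      linarith
    exact div_le_div₀ (by positivity) h10 hδ (isMinOn_iff.1 hz₀min x x.2)
  set T : ℝ := ⨆ x : V, ‖q' - (x:EuclideanSpace ℝ (Fin n))‖ / ‖(x:EuclideanSpace ℝ (Fin n))‖ with hTdef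
  have hTub : ∀ i : V, ‖q' - (i:EuclideanSpace ℝ (Fin n))‖ / ‖(i:EuclideanSpace ℝ (Fin n))‖ ≤ T :=
    fun i => le_ciSup hbdd' i
  clear_value T
  have hγleT : γ ≤ T := by
    by_cases hT1 : T < 1
    · have hq'0 : q' ≠ 0 := by
        intro h
        have h13 := hTub (⟨x₀, hx₀V⟩ : V)
        simp only [h, zero_sub, norm_neg] at h13
        rw [div_self (hxpos x₀ hx₀V).ne'] at h13
        linarith
      have hT0 : 0 ≤ T := le_trans (by positivity) (hTub (⟨x₀, hx₀V⟩ : V))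
      apply key q' T hT0 hT1 hq'0
      intro x hx
      exact (div_le_iff₀ (hxpos x hx)).1 (hTub (⟨x, hx⟩ : V))
    · push_neg at hT1
      linarith
  calc S = γ := part1
    _ ≤ T := hγleT
end
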